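/- Let k : ℕ → ℝ satisfy k(j) > 0 for all j and ∑_j k(j)² < ∞. Then the set of all x in ℓ² such that the family j ↦ |x(j)|²/k(j)² is summable with ∑'_j |x(j)|²/k(j)² ≤ 1 is a compact subset of ℓ². -/

import Mathlib

open Metric Filter
open scoped ENNReal NNReal

private lemma tb_aux {E : Type*} [PseudoMetricSpace E] {s : Set E}
    (h : ∀ ε > 0, ∃ K : Set E, IsCompact K ∧ ∀ x ∈ s, ∃ y ∈ K, dist x y < ε) :
    TotallyBounded s := by
  rw [Metric.totallyBounded_iff]
  intro ε hε
  obtain ⟨K, hK, hcov⟩ := h (ε / 2) (by linarith)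
  obtain ⟨t, htfin, htcov⟩ := Metric.totallyBounded_iff.1 hK.totallyBounded (ε / 2) (by linarith)
  refine ⟨t, htfin, fun x hx => ?_⟩
  obtain ⟨y, hyK, hxy⟩ := hcov x hx
  obtain ⟨z, hz, hyz⟩ := Set.mem_iUnion₂.1 (htcov hyK)
  refine Set.mem_iUnion₂.2 ⟨z, hz, ?_⟩
  rw [Metric.mem_ball] at hyz ⊢
  calc dist x z ≤ dist x y + dist y z := dist_triangle x y z
    _ < ε / 2 + ε / 2 := add_lt_add hxy hyz
    _ = ε := by ring

private lemma norm_sq_eq (f : lp (fun _ : ℕ => ℂ) 2) : ‖f‖ ^ 2 = ∑' i, ‖f i‖ ^ 2 := by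
  have h := lp.norm_rpow_eq_tsum (p := 2) (by norm_num) f
  have h2 : ((2 : ℝ≥0∞)).toReal = ((2 : ℕ) : ℝ) := by norm_num
  rw [h2] at h
  simp only [Real.rpow_natCast] at h
  exact h

private lemma summable_norm_sq (f : lp (fun _ : ℕ => ℂ) 2) :
    Summable fun i => ‖f i‖ ^ 2 := by
  have h := (lp.memℓp f).summable (p := 2) (by norm_num)
  have h2 : ((2 : ℝ≥0∞)).toReal = ((2 : ℕ) : ℝ) := by norm_num
  rw [h2] at h
  simpa only [Real.rpow_natCast] using h

set_option maxHeartbeats 1000000 in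
theorem stmt1 (k : ℕ → ℝ) (hk : ∀ j, 0 < k j) (hk_sum : Summable fun j => k j ^ 2) :
    IsCompact {x : lp (fun _ : ℕ => ℂ) 2 |
      Summable (fun j => ‖x j‖ ^ 2 / k j ^ 2) ∧ ∑' j, ‖x j‖ ^ 2 / k j ^ 2 ≤ 1} := by
  set S := {x : lp (fun _ : ℕ => ℂ) 2 |
      Summable (fun j => ‖x j‖ ^ 2 / k j ^ 2) ∧ ∑' j, ‖x j‖ ^ 2 / k j ^ 2 ≤ 1} with hS
  have hnn : ∀ (x : lp (fun _ : ℕ => ℂ) 2) (j : ℕ), 0 ≤ ‖x j‖ ^ 2 / k j ^ 2 :=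
    fun x j => div_nonneg (sq_nonneg _) (sq_nonneg _)
  -- coordinate evaluation is continuous
  have heval : ∀ j : ℕ, Continuous fun x : lp (fun _ : ℕ => ℂ) 2 => x j := by
    intro j
    refine (LipschitzWith.of_dist_le_mul (K := 1) fun x y => ?_).continuous
    rw [NNReal.coe_one, one_mul, dist_eq_norm, dist_eq_norm]
    have : x j - y j = (x - y) j := by simp
    rw [this]
    exact lp.norm_apply_le_norm (by norm_num) (x - y) j
  -- S is closed
  have hSeq : S = ⋂ N : ℕ, {x : lp (fun _ : ℕ => ℂ) 2 |
      ∑ j ∈ Finset.range N, ‖x j‖ ^ 2 / k j ^ 2 ≤ 1} := by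
    ext x
    simp only [Set.mem_iInter, Set.mem_setOf_eq, hS]
    constructor
    · rintro ⟨hs, hle⟩ N
      exact le_trans (hs.sum_le_tsum (Finset.range N) (fun i _ => hnn x i)) hle
    · intro h
      exact ⟨summable_of_sum_range_le (hnn x) h, Real.tsum_le_of_sum_range_le (hnn x) h⟩
  have hclosed : IsClosed S := by
    rw [hSeq]
    refine isClosed_iInter fun N => isClosed_le ?_ continuous_const
    exact continuous_finset_sum _ fun j _ =>
      (((heval j).norm.pow 2).div_const _)
  -- pointwise bound for members of S
  have hterm : ∀ x ∈ S, ∀ j, ‖x j‖ ^ 2 ≤ k j ^ 2 := by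
    rintro x ⟨hs, hle⟩ j
    have h1 : ‖x j‖ ^ 2 / k j ^ 2 ≤ 1 :=
      le_trans (hs.le_tsum j fun i _ => hnn x i) hle
    rwa [div_le_one (pow_pos (hk j) 2)] at h1
  -- totally bounded
  have htb : TotallyBounded S := by
    apply tb_aux
    intro ε hε
    -- choose N with small tail
    have htail : Tendsto (fun N => ∑' j, k (j + N) ^ 2) atTop (nhds 0) :=
      tendsto_sum_nat_add fun j => k j ^ 2
    obtain ⟨N, hN⟩ := (htail.eventually (gt_mem_nhds (by positivity : (0:ℝ) < ε ^ 2))).exists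
    set C : ℝ := ∑' j, k j ^ 2 with hC
    set R : ℝ := Real.sqrt C with hR
    -- the finite-dimensional compact piece
    set F : EuclideanSpace ℂ (Fin N) → lp (fun _ : ℕ => ℂ) 2 :=
      fun v => ∑ i : Fin N, v i • lp.single 2 (i : ℕ) (1 : ℂ) with hF
    have hFcont : Continuous F := by
      refine continuous_finset_sum _ fun i _ => ?_
      exact ((EuclideanSpace.proj i).continuous).smul continuous_const
    refine ⟨F '' Metric.closedBall 0 R, (isCompact_closedBall _ _).image hFcont, ?_⟩
    intro x hx
    -- the truncation of x
    set v : EuclideanSpace ℂ (Fin N) := WithLp.toLp 2 (fun i => x (i : ℕ)) with hv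
    have hFv : F v = ∑ i ∈ Finset.range N, lp.single 2 i (x i) := by
      rw [hF]
      rw [← Fin.sum_univ_eq_sum_range (fun i => lp.single 2 i (x i)) N]
      refine Finset.sum_congr rfl fun i _ => ?_
      rw [← lp.single_smul, smul_eq_mul, mul_one]
    have hxsum : Summable fun j => ‖x j‖ ^ 2 := summable_norm_sq x
    -- v is in the closed ball
    have hvmem : v ∈ Metric.closedBall (0 : EuclideanSpace ℂ (Fin N)) R := by
      rw [Metric.mem_closedBall, dist_zero_right, hR]
      rw [EuclideanSpace.norm_eq]
      apply Real.sqrt_le_sqrt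
      calc (∑ i : Fin N, ‖v i‖ ^ 2) = ∑ i ∈ Finset.range N, ‖x i‖ ^ 2 :=
            Fin.sum_univ_eq_sum_range (fun i => ‖x i‖ ^ 2) N
        _ ≤ ∑' j, ‖x j‖ ^ 2 := hxsum.sum_le_tsum _ (fun i _ => sq_nonneg _)
        _ ≤ C := Summable.tsum_le_tsum (hterm x hx) hxsum hk_sum
    refine ⟨F v, Set.mem_image_of_mem F hvmem, ?_⟩
    -- tail estimate
    have hcompl := lp.norm_compl_sum_single (p := 2) (by norm_num) x (Finset.range N)
    have h2 : ((2 : ℝ≥0∞)).toReal = ((2 : ℕ) : ℝ) := by norm_num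
    rw [h2] at hcompl
    simp only [Real.rpow_natCast] at hcompl
    rw [← hFv] at hcompl
    have hsplit : ∑ j ∈ Finset.range N, ‖x j‖ ^ 2 + ∑' j, ‖x (j + N)‖ ^ 2 = ∑' j, ‖x j‖ ^ 2 :=
      Summable.sum_add_tsum_nat_add N hxsum
    have hnormx : ‖x‖ ^ 2 = ∑' j, ‖x j‖ ^ 2 := norm_sq_eq x
    have hsub : ‖x - F v‖ ^ 2 = ∑' j, ‖x (j + N)‖ ^ 2 := by
      rw [hcompl, hnormx, ← hsplit]; ring
    have htail_le : (∑' j, ‖x (j + N)‖ ^ 2) ≤ ∑' j, k (j + N) ^ 2 := by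
      refine Summable.tsum_le_tsum (fun j => hterm x hx (j + N)) ?_ ?_
      · exact (summable_nat_add_iff N).2 hxsum
      · exact (summable_nat_add_iff N).2 hk_sum
    have hlt : ‖x - F v‖ ^ 2 < ε ^ 2 := by
      rw [hsub]; exact lt_of_le_of_lt htail_le hN
    rw [dist_eq_norm]
    exact lt_of_pow_lt_pow_left₀ 2 (le_of_lt hε) hlt
  exact TotallyBounded.isCompact_of_isClosed htb hclosed
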